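/- Fix $\varepsilon_1, \varepsilon_2, \gamma_s > 0$. Define $G(S,\rho) = \frac{-\log\left(\frac{S \varepsilon_1}{S \varepsilon_1 + S^\rho \varepsilon_2 \gamma_s}\right)}{\log S}$ for $S > 1$. Then as $S \to \infty$: $G(S,\rho) \to 0$ if $\rho \leq 1$, $G(S,\rho) \to \rho - 1$ if $1 < \rho \leq 2$, and $\min\{1, \lim_{S\to\infty} G(S,\rho)\} = 1$ if $\rho > 2$. -/

import Mathlib

open Real Filter Topology

lemma mf_aux_eq (ε1 ε2 γs : ℝ) (hε1 : 0 < ε1) (hε2 : 0 < ε2) (hγs : 0 < γs) (ρ S : ℝ)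
    (hS : 1 < S) :
    -Real.logb 2 (S * ε1 / (S * ε1 + S ^ ρ * ε2 * γs)) / Real.logb 2 S
      = Real.log (1 + S ^ (ρ - 1) * (ε2 * γs / ε1)) / Real.log S := by
  have hS0 : (0:ℝ) < S := by linarith
  have hA : 0 < S * ε1 := by positivity
  have hB : 0 < S ^ ρ * ε2 * γs := by positivity
  have hAB : 0 < S * ε1 + S ^ ρ * ε2 * γs := by linarith
  have hpow : S ^ ρ = S ^ (ρ - 1) * S := by
    rw [← Real.rpow_add_one hS0.ne' (ρ - 1)]; ring_nf
  have h1 : 1 + S ^ (ρ - 1) * (ε2 * γs / ε1) = (S * ε1 + S ^ ρ * ε2 * γs) / (S * ε1) := by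
    rw [hpow]; field_simp
  have hl2 : Real.log 2 ≠ 0 := (Real.log_pos (by norm_num)).ne'
  have hlS : Real.log S ≠ 0 := (Real.log_pos hS).ne'
  rw [h1, Real.logb, Real.logb, Real.log_div hAB.ne' hA.ne', Real.log_div hA.ne' hAB.ne']
  field_simp
  ring

lemma mf_lim_le_one (c ρ : ℝ) (hc : 0 < c) (hρ : ρ ≤ 1) :
    Tendsto (fun S => Real.log (1 + S ^ (ρ - 1) * c) / Real.log S) atTop (𝓝 0) := by
  have hupper : Tendsto (fun S : ℝ => Real.log (1 + c) / Real.log S) atTop (𝓝 0) :=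
    tendsto_const_nhds.div_atTop Real.tendsto_log_atTop
  refine tendsto_of_tendsto_of_tendsto_of_le_of_le' tendsto_const_nhds hupper ?_ ?_
  · filter_upwards [eventually_gt_atTop (1:ℝ)] with S hS
    have hS0 : (0:ℝ) < S := by linarith
    have h1 : (1:ℝ) ≤ 1 + S ^ (ρ - 1) * c := by
      have : 0 ≤ S ^ (ρ - 1) * c := by positivity
      linarith
    exact div_nonneg (Real.log_nonneg h1) (Real.log_pos hS).le
  · filter_upwards [eventually_gt_atTop (1:ℝ)] with S hS
    have hS0 : (0:ℝ) < S := by linarith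
    have hle : S ^ (ρ - 1) ≤ 1 := Real.rpow_le_one_of_one_le_of_nonpos hS.le (by linarith)
    have h2 : Real.log (1 + S ^ (ρ - 1) * c) ≤ Real.log (1 + c) := by
      have h3 : (0:ℝ) < 1 + S ^ (ρ - 1) * c := by positivity
      have h4 : 1 + S ^ (ρ - 1) * c ≤ 1 + c := by nlinarith
      exact Real.log_le_log h3 h4
    have hlS : (0:ℝ) < Real.log S := Real.log_pos hS
    gcongr

lemma mf_lim_gt_one (c ρ : ℝ) (hc : 0 < c) (hρ : 1 < ρ) :
    Tendsto (fun S => Real.log (1 + S ^ (ρ - 1) * c) / Real.log S) atTop (𝓝 (ρ - 1)) := by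
  have h0 : Tendsto (fun S : ℝ => S ^ (1 - ρ)) atTop (𝓝 0) := by
    have := tendsto_rpow_neg_atTop (show (0:ℝ) < ρ - 1 by linarith)
    simpa [neg_sub] using this
  have hnum : Tendsto (fun S : ℝ => Real.log (S ^ (1 - ρ) + c)) atTop (𝓝 (Real.log c)) := by
    have hadd : Tendsto (fun S : ℝ => S ^ (1 - ρ) + c) atTop (𝓝 c) := by
      simpa using h0.add tendsto_const_nhds
    have hcont := (Real.continuousAt_log hc.ne').tendsto
    exact hcont.comp hadd
  have hsec : Tendsto (fun S : ℝ => Real.log (S ^ (1 - ρ) + c) / Real.log S) atTop (𝓝 0) :=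
    hnum.div_atTop Real.tendsto_log_atTop
  have hmain : Tendsto (fun S : ℝ => (ρ - 1) + Real.log (S ^ (1 - ρ) + c) / Real.log S)
      atTop (𝓝 (ρ - 1)) := by
    simpa using tendsto_const_nhds.add hsec
  refine hmain.congr' ?_
  filter_upwards [eventually_gt_atTop (1:ℝ)] with S hS
  have hS0 : (0:ℝ) < S := by linarith
  have hp : 0 < S ^ (ρ - 1) := Real.rpow_pos_of_pos hS0 _
  have hq : 0 < S ^ (1 - ρ) + c := by positivity
  have hone : S ^ (ρ - 1) * S ^ (1 - ρ) = 1 := by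
    rw [← Real.rpow_add hS0]; norm_num
  have hsplit : 1 + S ^ (ρ - 1) * c = S ^ (ρ - 1) * (S ^ (1 - ρ) + c) := by
    rw [mul_add, hone]
  have hlS : Real.log S ≠ 0 := (Real.log_pos hS).ne'
  rw [hsplit, Real.log_mul hp.ne' hq.ne', Real.log_rpow hS0]
  field_simp

theorem mf_secrecy_outage_diversity
    (ε1 ε2 γs : ℝ) (hε1 : 0 < ε1) (hε2 : 0 < ε2) (hγs : 0 < γs) (ρ : ℝ)
    (G : ℝ → ℝ → ℝ)
    (hG : ∀ S ρ', G S ρ' =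
      -Real.logb 2 (S * ε1 / (S * ε1 + S ^ ρ' * ε2 * γs)) / Real.logb 2 S) :
    (ρ ≤ 1 → Tendsto (fun S => G S ρ) atTop (𝓝 0))
    ∧ (1 < ρ → ρ ≤ 2 → Tendsto (fun S => G S ρ) atTop (𝓝 (ρ - 1)))
    ∧ (2 < ρ → Tendsto (fun S => G S ρ) atTop (𝓝 (ρ - 1)) ∧ min 1 (ρ - 1) = 1) := by
  have hc : 0 < ε2 * γs / ε1 := by positivity
  have hGeq : (fun S => Real.log (1 + S ^ (ρ - 1) * (ε2 * γs / ε1)) / Real.log S)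
      =ᶠ[atTop] (fun S => G S ρ) := by
    filter_upwards [eventually_gt_atTop (1:ℝ)] with S hS
    rw [hG]
    exact (mf_aux_eq ε1 ε2 γs hε1 hε2 hγs ρ S hS).symm
  refine ⟨fun h => Tendsto.congr' hGeq (mf_lim_le_one _ ρ hc h),
    fun h _ => Tendsto.congr' hGeq (mf_lim_gt_one _ ρ hc h),
    fun h => ⟨Tendsto.congr' hGeq (mf_lim_gt_one _ ρ hc (by linarith)),
      min_eq_left (by linarith)⟩⟩
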